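/- Let A be an irreducible tridiagonal matrix of size (d+1)×(d+1) over a field 𝕜. Then for all 0 ≤ i,j ≤ d: (i) the entry (A^r)_{i,j} = 0 whenever 0 ≤ r ≤ d and r < |i−j|; (ii) if i ≤ j then (A^{j−i})_{i,j} = ∏_{h=i}^{j−1} A_{h,h+1}, and in particular (A^{j−i})_{i,j} ≠ 0; (iii) if i ≥ j then (A^{i−j})_{i,j} = ∏_{h=j}^{i−1} A_{h+1,h}, and in particular (A^{i−j})_{i,j} ≠ 0. -/

import Mathlib

private lemma aux_zero {𝕜 : Type*} [Field 𝕜] {d : ℕ}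
    (A : Matrix (Fin (d + 1)) (Fin (d + 1)) 𝕜)
    (htri : ∀ i j : Fin (d + 1), 1 < |((i : ℕ) : ℤ) - ((j : ℕ) : ℤ)| → A i j = 0) :
    ∀ (r : ℕ) (i j : Fin (d + 1)), (r : ℤ) < |((i : ℕ) : ℤ) - ((j : ℕ) : ℤ)| →
      (A ^ r) i j = 0 := by
  intro r
  induction r with
  | zero =>
    intro i j h
    have hij : i ≠ j := by
      intro he; subst he; simp at h
    simp [Matrix.one_apply, hij]
  | succ r ih =>
    intro i j h
    rw [pow_succ, Matrix.mul_apply]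
    apply Finset.sum_eq_zero
    intro k _
    by_cases hk : 1 < |((k : ℕ) : ℤ) - ((j : ℕ) : ℤ)|
    · rw [htri k j hk, mul_zero]
    · push_neg at hk
      have htr := abs_sub_le ((i : ℕ) : ℤ) ((k : ℕ) : ℤ) ((j : ℕ) : ℤ)
      have : (r : ℤ) < |((i : ℕ) : ℤ) - ((k : ℕ) : ℤ)| := by
        push_cast at h ⊢; omega
      rw [ih i k this, zero_mul]

open Fin.NatCast in
private lemma aux_prod {𝕜 : Type*} [Field 𝕜] {d : ℕ}
    (A : Matrix (Fin (d + 1)) (Fin (d + 1)) 𝕜)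
    (htri : ∀ i j : Fin (d + 1), 1 < |((i : ℕ) : ℤ) - ((j : ℕ) : ℤ)| → A i j = 0) :
    ∀ (n : ℕ) (i j : Fin (d + 1)), (j : ℕ) = (i : ℕ) + n →
      (A ^ n) i j
        = ∏ h ∈ Finset.Ico (i : ℕ) (j : ℕ), A (h : Fin (d + 1)) ((h + 1 : ℕ) : Fin (d + 1)) := by
  intro n
  induction n with
  | zero =>
    intro i j hij
    have : i = j := Fin.ext (by omega)
    subst this
    simp [Matrix.one_apply]
  | succ n ih =>
    intro i j hij
    have hj1 : 1 ≤ (j : ℕ) := by omega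
    have hjd : (j : ℕ) < d + 1 := j.isLt
    set k₀ : Fin (d + 1) := ⟨(j : ℕ) - 1, by omega⟩ with hk₀
    rw [pow_succ, Matrix.mul_apply]
    rw [Finset.sum_eq_single k₀]
    · have hk₀v : (k₀ : ℕ) = (i : ℕ) + n := by simp [hk₀]; omega
      rw [ih i k₀ hk₀v]
      have hsplit : (j : ℕ) = ((j : ℕ) - 1) + 1 := by omega
      rw [hsplit, Finset.prod_Ico_succ_top (by omega)]
      have e1 : (k₀ : ℕ) = (j : ℕ) - 1 := rfl
      have e2 : ((((j : ℕ) - 1 : ℕ)) : Fin (d + 1)) = k₀ := by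
        apply Fin.ext
        rw [Fin.val_cast_of_lt (by omega), e1]
      have e3 : ((((j : ℕ) - 1 + 1 : ℕ)) : Fin (d + 1)) = j := by
        apply Fin.ext
        rw [Fin.val_cast_of_lt (by omega)]
        omega
      rw [e1, e2, e3]
    · intro k _ hk
      by_cases hkj : 1 < |((k : ℕ) : ℤ) - ((j : ℕ) : ℤ)|
      · rw [htri k j hkj, mul_zero]
      · push_neg at hkj
        have hkne : (k : ℕ) ≠ (j : ℕ) - 1 := by
          intro he
          exact hk (Fin.ext (by simp [hk₀, he]))
        have hke : (k : ℕ) ≥ (j : ℕ) := by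
          rw [abs_le] at hkj; omega
        have : (n : ℤ) < |((i : ℕ) : ℤ) - ((k : ℕ) : ℤ)| := by
          rw [abs_sub_comm]
          have h1 : (n : ℤ) < ((k : ℕ) : ℤ) - ((i : ℕ) : ℤ) := by omega
          exact lt_of_lt_of_le h1 (le_abs_self _)
        rw [aux_zero A htri n i k this, zero_mul]
    · intro h
      exact absurd (Finset.mem_univ k₀) h

open Fin.NatCast in
theorem stmt_0 {𝕜 : Type*} [Field 𝕜] {d : ℕ}
    (A : Matrix (Fin (d + 1)) (Fin (d + 1)) 𝕜)
    (htri : ∀ i j : Fin (d + 1), 1 < |((i : ℕ) : ℤ) - ((j : ℕ) : ℤ)| → A i j = 0)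
    (hirr : ∀ i j : Fin (d + 1), |((i : ℕ) : ℤ) - ((j : ℕ) : ℤ)| = 1 → A i j ≠ 0) :
    (∀ (r : ℕ) (i j : Fin (d + 1)), r ≤ d → (r : ℤ) < |((i : ℕ) : ℤ) - ((j : ℕ) : ℤ)| →
        (A ^ r) i j = 0)
    ∧ (∀ i j : Fin (d + 1), i ≤ j →
        (A ^ ((j : ℕ) - (i : ℕ))) i j
          = ∏ h ∈ Finset.Ico (i : ℕ) (j : ℕ), A (h : Fin (d + 1)) ((h + 1 : ℕ) : Fin (d + 1))
        ∧ (A ^ ((j : ℕ) - (i : ℕ))) i j ≠ 0)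
    ∧ (∀ i j : Fin (d + 1), j ≤ i →
        (A ^ ((i : ℕ) - (j : ℕ))) i j
          = ∏ h ∈ Finset.Ico (j : ℕ) (i : ℕ), A ((h + 1 : ℕ) : Fin (d + 1)) (h : Fin (d + 1))
        ∧ (A ^ ((i : ℕ) - (j : ℕ))) i j ≠ 0) := by
  refine ⟨fun r i j _ h => aux_zero A htri r i j h, fun i j hij => ?_, fun i j hij => ?_⟩
  · have hij' : (i : ℕ) ≤ (j : ℕ) := hij
    have heq := aux_prod A htri ((j : ℕ) - (i : ℕ)) i j (by omega)
    refine ⟨heq, ?_⟩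
    rw [heq]
    rw [Finset.prod_ne_zero_iff]
    intro h hh
    rw [Finset.mem_Ico] at hh
    apply hirr
    rw [Fin.val_cast_of_lt (by omega), Fin.val_cast_of_lt (by omega)]
    push_cast
    rw [show ((h : ℤ)) - ((h : ℤ) + 1) = -1 by ring]
    norm_num
  · have hij' : (j : ℕ) ≤ (i : ℕ) := hij
    have htriT : ∀ a b : Fin (d + 1), 1 < |((a : ℕ) : ℤ) - ((b : ℕ) : ℤ)| → A.transpose a b = 0 := by
      intro a b h
      exact htri b a (by rwa [abs_sub_comm] at h)
    have heq := aux_prod A.transpose htriT ((i : ℕ) - (j : ℕ)) j i (by omega)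
    rw [← Matrix.transpose_pow] at heq
    have heq' : (A ^ ((i : ℕ) - (j : ℕ))) i j
        = ∏ h ∈ Finset.Ico (j : ℕ) (i : ℕ), A ((h + 1 : ℕ) : Fin (d + 1)) (h : Fin (d + 1)) :=
      heq
    refine ⟨heq', ?_⟩
    rw [heq', Finset.prod_ne_zero_iff]
    intro h hh
    rw [Finset.mem_Ico] at hh
    apply hirr
    rw [Fin.val_cast_of_lt (by omega), Fin.val_cast_of_lt (by omega)]
    push_cast
    rw [show ((h : ℤ) + 1) - (h : ℤ) = 1 by ring]
    norm_num
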